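/- Let (a_{n,q}), (a'_{n,q}) be nonnegative double sequences and (b_n) a nonnegative sequence with a_{n,q} ≤ b_n ≤ a'_{n,q} for all n, q. Suppose lim_{n→∞} a_{n,q} = c⁻(q)a(q), lim_{n→∞} a'_{n,q} = c⁺(q)a(q), and lim_{q→∞} c⁻(q) = lim_{q→∞} c⁺(q) = 1. Then lim_{q→∞} a(q) and lim_{n→∞} b_n both exist and are equal to a common nonnegative constant. -/

import Mathlib

open MeasureTheory ProbabilityTheory Filter Set Real

noncomputable section

/-- A real-valued Lévy process `ξ` under the probability measure `μ`:
càdlàg paths, `ξ 0 = 0`, stationary and independent increments. -/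
structure IsLevyProcess {Ω : Type*} [MeasurableSpace Ω] (μ : Measure Ω)
    (ξ : ℝ → Ω → ℝ) : Prop where
  isProb : IsProbabilityMeasure μ
  meas : ∀ t, Measurable (ξ t)
  init : ∀ ω, ξ 0 ω = 0
  cadlag_right : ∀ ω t, ContinuousWithinAt (fun s => ξ s ω) (Ici t) t
  cadlag_left : ∀ ω t, 0 < t →
    ∃ l : ℝ, Tendsto (fun s => ξ s ω) (nhdsWithin t (Iio t)) (nhds l)
  stationary : ∀ s t : ℝ, 0 ≤ s → s ≤ t →
    Measure.map (fun ω => ξ t ω - ξ s ω) μ = Measure.map (ξ (t - s)) μ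
  indep : ∀ s t : ℝ, 0 ≤ s → s ≤ t →
    Indep (MeasurableSpace.comap (fun ω => ξ t ω - ξ s ω) (borel ℝ))
      (⨆ u ∈ Icc (0:ℝ) s, MeasurableSpace.comap (ξ u) (borel ℝ)) μ

/-- Laplace exponent `ψ(λ) = log E[exp (λ ξ₁)]`. -/
def laplaceExponent {Ω : Type*} [MeasurableSpace Ω] (μ : Measure Ω)
    (ξ : ℝ → Ω → ℝ) (l : ℝ) : ℝ :=
  Real.log (∫ ω, Real.exp (l * ξ 1 ω) ∂μ)

/-- Exponential functional `I_t(ξ) = ∫₀ᵗ e^{-ξ_s} ds`. -/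
def expFunctional {Ω : Type*} (ξ : ℝ → Ω → ℝ) (t : ℝ) (ω : Ω) : ℝ :=
  ∫ s in (0:ℝ)..t, Real.exp (-(ξ s ω))

/-- Exponential functional `I_∞(ξ) = ∫₀^∞ e^{-ξ_s} ds`. -/
def expFunctionalInf {Ω : Type*} (ξ : ℝ → Ω → ℝ) (ω : Ω) : ℝ :=
  ∫ s in Ioi (0:ℝ), Real.exp (-(ξ s ω))

/-- `μ'` is the Esscher transform of `μ` (w.r.t. the Lévy process `ξ`) with
parameter `l`: on the natural σ-algebra up to time `t` it has density
`exp (l ξ_t - t ψ(l))` with respect to `μ`. -/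
def IsEsscher {Ω : Type*} [MeasurableSpace Ω] (μ : Measure Ω) (ξ : ℝ → Ω → ℝ)
    (l : ℝ) (μ' : Measure Ω) : Prop :=
  IsProbabilityMeasure μ' ∧ ∀ t : ℝ, 0 ≤ t → ∀ A : Set Ω,
    MeasurableSet[⨆ u ∈ Icc (0:ℝ) t, MeasurableSpace.comap (ξ u) (borel ℝ)] A →
    μ' A = ENNReal.ofReal
      (∫ ω in A, Real.exp (l * ξ t ω - t * laplaceExponent μ ξ l) ∂μ)

/-- sandwiching lemma for double sequences (Lemma 3 of the
Appendix): if `a_{n,q} ≤ b_n ≤ a'_{n,q}`, `a_{n,q} → c⁻(q)a(q)`,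
`a'_{n,q} → c⁺(q)a(q)` as `n → ∞` and `c⁻(q), c⁺(q) → 1` as `q → ∞`, then
`a(q)` and `b_n` converge to a common nonnegative limit. -/
theorem sandwich_double_sequences
    (a a' : ℕ → ℕ → ℝ) (b : ℕ → ℝ) (aq cm cp : ℕ → ℝ)
    (hnonneg : ∀ n q, 0 ≤ a n q ∧ 0 ≤ a' n q ∧ 0 ≤ b n)
    (hle : ∀ n q, a n q ≤ b n ∧ b n ≤ a' n q)
    (hlim : ∀ q, Tendsto (fun n => a n q) atTop (nhds (cm q * aq q)))
    (hlim' : ∀ q, Tendsto (fun n => a' n q) atTop (nhds (cp q * aq q)))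
    (hcm : Tendsto cm atTop (nhds 1)) (hcp : Tendsto cp atTop (nhds 1)) :
    ∃ L : ℝ, 0 ≤ L ∧ Tendsto aq atTop (nhds L) ∧ Tendsto b atTop (nhds L) := by
  
  have hbge : IsBoundedUnder (· ≥ ·) atTop b :=
    isBoundedUnder_of ⟨0, fun n => (hnonneg n 0).2.2⟩
  have hble : IsBoundedUnder (· ≤ ·) atTop b := by
    obtain ⟨M, hM⟩ := (hlim' 0).bddAbove_range
    exact isBoundedUnder_of ⟨M, fun n => le_trans (hle n 0).2 (hM ⟨n, rfl⟩)⟩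
  set Lm := liminf b atTop with hLm
  set Lp := limsup b atTop with hLp
  have h1 : ∀ q, cm q * aq q ≤ Lm := fun q => by
    rw [← (hlim q).liminf_eq]
    exact liminf_le_liminf (Eventually.of_forall fun n => (hle n q).1)
      ((hlim q).isBoundedUnder_ge) hble.isCoboundedUnder_ge
  have h2 : ∀ q, Lp ≤ cp q * aq q := fun q => by
    rw [← (hlim' q).limsup_eq]
    exact limsup_le_limsup (Eventually.of_forall fun n => (hle n q).2)
      (hbge.isCoboundedUnder_le) ((hlim' q).isBoundedUnder_le)
  have hLmLp : Lm ≤ Lp := liminf_le_limsup hble hbge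
  have hpos : ∀ᶠ q in atTop, 0 < cm q ∧ 0 < cp q :=
    (hcm.eventually (eventually_gt_nhds one_pos)).and
      (hcp.eventually (eventually_gt_nhds one_pos))
  have hsq : ∀ᶠ q in atTop, Lp / cp q ≤ aq q ∧ aq q ≤ Lm / cm q := by
    filter_upwards [hpos] with q ⟨h1', h2'⟩
    exact ⟨(div_le_iff₀' h2').2 (h2 q), (le_div_iff₀' h1').2 (h1 q)⟩
  have htp : Tendsto (fun q => Lp / cp q) atTop (nhds Lp) := by
    have h := (tendsto_const_nhds (x := Lp)).div hcp one_ne_zero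
    rw [div_one] at h
    exact h
  have htm : Tendsto (fun q => Lm / cm q) atTop (nhds Lm) := by
    have h := (tendsto_const_nhds (x := Lm)).div hcm one_ne_zero
    rw [div_one] at h
    exact h
  have hPM : Lp ≤ Lm :=
    le_of_tendsto_of_tendsto htp htm
      (hsq.mono fun q h => le_trans h.1 h.2)
  have heq : Lm = Lp := le_antisymm hLmLp hPM
  have haq : Tendsto aq atTop (nhds Lm) := by
    refine tendsto_of_tendsto_of_tendsto_of_le_of_le' (heq ▸ htp) htm
      (hsq.mono fun q h => h.1) (hsq.mono fun q h => h.2)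
  refine ⟨Lm, ?_, haq, ?_⟩
  · exact le_liminf_of_le hble.isCoboundedUnder_ge
      (Eventually.of_forall fun n => (hnonneg n 0).2.2)
  · exact tendsto_of_liminf_eq_limsup rfl heq.symm hble hbge
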